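/- The operator norm of λ_{SL₂(ℤ)}(S) + λ_{SL₂(ℤ)}(S⁻¹) + λ_{SL₂(ℤ)}(T) + λ_{SL₂(ℤ)}(T⁻¹) on ℓ²(SL₂(ℤ)) is strictly less than 4. -/

import Mathlib

open Matrix
open scoped ENNReal

/-- A function on a group composed with left translation by `g⁻¹` is still ℓ². -/
lemma memℓp_translate {Γ : Type*} [Group Γ] (g : Γ) (f : lp (fun _ : Γ => ℂ) 2) :
    Memℓp (fun x => f (g⁻¹ * x)) 2 := by
  apply memℓp_gen
  have hs : Summable fun x : Γ => ‖f x‖ ^ (2 : ℝ≥0∞).toReal :=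
    (lp.memℓp f).summable (by norm_num)
  exact ((Equiv.mulLeft g⁻¹).summable_iff
    (f := fun x : Γ => ‖f x‖ ^ (2 : ℝ≥0∞).toReal)).2 hs

/-- The left regular representation of a group `Γ` on `ℓ²(Γ)`, as a bounded operator
for each group element: `(λ(g) f)(x) = f (g⁻¹ x)`. -/
noncomputable def lam (Γ : Type*) [Group Γ] (g : Γ) :
    lp (fun _ : Γ => ℂ) 2 →L[ℂ] lp (fun _ : Γ => ℂ) 2 := by
  refine LinearMap.mkContinuous
    { toFun := fun f => ⟨fun x => f (g⁻¹ * x), memℓp_translate g f⟩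
      map_add' := ?_
      map_smul' := ?_ } 1 ?_
  · intro f₁ f₂; ext x; simp <;> rfl
  · intro c f; ext x; simp
  · intro f
    have h₁ : ‖(⟨fun x => f (g⁻¹ * x), memℓp_translate g f⟩ : lp (fun _ : Γ => ℂ) 2)‖
        = ‖f‖ := by
      rw [lp.norm_eq_tsum_rpow (by norm_num) f,
        lp.norm_eq_tsum_rpow (by norm_num)]
      congr 1
      exact (Equiv.mulLeft g⁻¹).tsum_eq (f := fun x : Γ => ‖f x‖ ^ (2 : ℝ≥0∞).toReal)
    exact le_of_eq (h₁.trans (one_mul ‖f‖).symm)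

/-- The standard generator `S = [[0,-1],[1,0]]` of SL₂(ℤ). -/
def S : Matrix.SpecialLinearGroup (Fin 2) ℤ :=
  ⟨!![0, -1; 1, 0], by norm_num [Matrix.det_fin_two_of]⟩

/-- The standard generator `T = [[1,1],[0,1]]` of SL₂(ℤ). -/
def T : Matrix.SpecialLinearGroup (Fin 2) ℤ :=
  ⟨!![1, 1; 0, 1], by norm_num [Matrix.det_fin_two_of]⟩

section Aux

open scoped Classical

noncomputable section

abbrev SL2 := Matrix.SpecialLinearGroup (Fin 2) ℤ
abbrev H2 := lp (fun _ : SL2 => ℂ) 2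

lemma ite_nonneg' (c : Prop) [Decidable c] (a : ℝ) (ha : 0 ≤ a) :
    0 ≤ if c then a else 0 := by split <;> simp [ha]

lemma ite_le_self' (c : Prop) [Decidable c] (a : ℝ) (ha : 0 ≤ a) :
    (if c then a else 0) ≤ a := by split <;> simp [ha]

lemma lam_apply (g : SL2) (f : H2) (x : SL2) : lam SL2 g f x = f (g⁻¹ * x) := rfl

lemma lam_norm (g : SL2) (f : H2) : ‖lam SL2 g f‖ = ‖f‖ := by
  rw [lp.norm_eq_tsum_rpow (by norm_num) (lam SL2 g f),
    lp.norm_eq_tsum_rpow (by norm_num) f]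
  congr 1
  exact (Equiv.mulLeft g⁻¹).tsum_eq (f := fun x : SL2 => ‖f x‖ ^ (2 : ℝ≥0∞).toReal)

lemma lam_comp (g h : SL2) (f : H2) : lam SL2 g (lam SL2 h f) = lam SL2 (g * h) f := by
  apply lp.ext
  funext x
  show f (h⁻¹ * (g⁻¹ * x)) = f ((g * h)⁻¹ * x)
  rw [_root_.mul_inv_rev, mul_assoc]

lemma lam_one (f : H2) : lam SL2 1 f = f := by
  apply lp.ext
  funext x
  show f (1⁻¹ * x) = f x
  simp

lemma summable_sq (f : H2) : Summable (fun x : SL2 => ‖f x‖ ^ 2) := by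
  have hs : Summable fun x : SL2 => ‖f x‖ ^ (2 : ℝ≥0∞).toReal :=
    (lp.memℓp f).summable (by norm_num)
  have h2 : ((2 : ℝ≥0∞)).toReal = ((2 : ℕ) : ℝ) := by norm_num
  rw [h2] at hs
  simpa [Real.rpow_natCast] using hs

lemma norm_sq_eq (f : H2) : ‖f‖ ^ 2 = ∑' x : SL2, ‖f x‖ ^ 2 := by
  have h := lp.norm_rpow_eq_tsum (p := 2) (by norm_num) f
  have h2 : ((2 : ℝ≥0∞)).toReal = ((2 : ℕ) : ℝ) := by norm_num
  rw [h2] at h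
  simpa [Real.rpow_natCast] using h

lemma summable_ite (Q : SL2 → Prop) (f : H2) :
    Summable (fun x : SL2 => if Q x then ‖f x‖ ^ 2 else 0) := by
  refine Summable.of_nonneg_of_le (fun x => ?_) (fun x => ?_) (summable_sq f)
  · exact ite_nonneg' _ _ (by positivity)
  · exact ite_le_self' _ _ (by positivity)

/-- mass of `f` on the set defined by `Q` -/
def msq (Q : SL2 → Prop) (f : H2) : ℝ := ∑' x : SL2, if Q x then ‖f x‖ ^ 2 else 0

/-- restriction of `f` to the set defined by `Q` -/
def restr (Q : SL2 → Prop) (f : H2) : H2 :=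
  ⟨fun x => if Q x then f x else 0, by
    apply memℓp_gen
    have hs : Summable fun x : SL2 => ‖f x‖ ^ (2 : ℝ≥0∞).toReal :=
      (lp.memℓp f).summable (by norm_num)
    refine Summable.of_nonneg_of_le (fun x => ?_) (fun x => ?_) hs
    · positivity
    · by_cases h : Q x
      · rw [if_pos h]
      · rw [if_neg h, norm_zero, Real.zero_rpow (by norm_num)]
        positivity⟩

lemma restr_apply (Q : SL2 → Prop) (f : H2) (x : SL2) :
    restr Q f x = if Q x then f x else 0 := rfl

lemma restr_norm_sq (Q : SL2 → Prop) (f : H2) : ‖restr Q f‖ ^ 2 = msq Q f := by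
  rw [norm_sq_eq]
  apply tsum_congr
  intro x
  rw [restr_apply]
  by_cases h : Q x
  · rw [if_pos h, if_pos h]
  · rw [if_neg h, if_neg h, norm_zero]
    norm_num

lemma restr_le_norm (Q : SL2 → Prop) (f : H2) : ‖restr Q f‖ ≤ ‖f‖ := by
  have h1 : ‖restr Q f‖ ^ 2 ≤ ‖f‖ ^ 2 := by
    rw [restr_norm_sq, norm_sq_eq, msq]
    exact Summable.tsum_le_tsum (fun x => ite_le_self' _ _ (by positivity))
      (summable_ite Q f) (summable_sq f)
  nlinarith [norm_nonneg (restr Q f), norm_nonneg f]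

lemma restr_sub (Q : SL2 → Prop) (f g : H2) :
    restr Q f - restr Q g = restr Q (f - g) := by
  apply lp.ext
  funext x
  have h1 : (restr Q f - restr Q g) x = restr Q f x - restr Q g x := by
    exact lp.coeFn_sub (restr Q f) (restr Q g) ▸ rfl
  have hs : (f - g) x = f x - g x := by
    exact lp.coeFn_sub f g ▸ rfl
  show (restr Q f - restr Q g) x = restr Q (f - g) x
  rw [h1, restr_apply, restr_apply, restr_apply, hs]
  by_cases h : Q x <;> simp [h]

/-- The key mass-transport inequality from a one-sided ping-pong condition. -/
lemma mass_pingpong (Q Q' : SL2 → Prop) (Pe : SL2)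
    (hC : ∀ g : SL2, ¬ Q' g → Q (Pe * g)) (f : H2) (hf : ‖f‖ = 1) :
    (1 : ℝ) ≤ msq Q f + msq Q' f + 2 * ‖lam SL2 Pe f - f‖ := by
  set na := ‖restr Q f‖ with hna
  set nb := ‖restr Q (lam SL2 Pe f)‖ with hnb
  set d := ‖lam SL2 Pe f - f‖ with hd
  have hkey : (1 : ℝ) ≤ msq Q (lam SL2 Pe f) + msq Q' f := by
    have h1 : msq Q (lam SL2 Pe f)
        = ∑' y : SL2, (if Q (Pe * y) then ‖f y‖ ^ 2 else 0) := by
      rw [msq, ← (Equiv.mulLeft Pe).tsum_eq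
        (f := fun x : SL2 => if Q x then ‖(lam SL2 Pe f) x‖ ^ 2 else 0)]
      apply tsum_congr
      intro y
      have hy : (lam SL2 Pe f) (Pe * y) = f y := by
        show f (Pe⁻¹ * (Pe * y)) = f y
        rw [inv_mul_cancel_left]
      simp only [Equiv.coe_mulLeft]
      rw [hy]; congr
    rw [h1]
    have hle : ∀ y : SL2, ‖f y‖ ^ 2
        ≤ (if Q (Pe * y) then ‖f y‖ ^ 2 else 0) + (if Q' y then ‖f y‖ ^ 2 else 0) := by
      intro y
      by_cases h : Q' y
      · rw [if_pos h]
        have h2 : (0:ℝ) ≤ (if Q (Pe * y) then ‖f y‖ ^ 2 else 0) :=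
          ite_nonneg' _ _ (by positivity)
        linarith
      · rw [if_pos (hC y h), if_neg h]
        have h2 : (0:ℝ) ≤ ‖f y‖ ^ 2 := by positivity
        linarith
    calc (1 : ℝ) = ∑' x : SL2, ‖f x‖ ^ 2 := by
          rw [← norm_sq_eq, hf]; norm_num
      _ ≤ ∑' y : SL2, ((if Q (Pe * y) then ‖f y‖ ^ 2 else 0)
            + (if Q' y then ‖f y‖ ^ 2 else 0)) := by
          refine Summable.tsum_le_tsum hle (summable_sq f) (Summable.add ?_ ?_)
          · exact summable_ite (fun y => Q (Pe * y)) f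
          · exact summable_ite Q' f
      _ = (∑' y : SL2, if Q (Pe * y) then ‖f y‖ ^ 2 else 0) + msq Q' f := by
          rw [msq]
          exact Summable.tsum_add (summable_ite (fun y => Q (Pe * y)) f) (summable_ite Q' f)
  have h2 : nb ^ 2 = msq Q (lam SL2 Pe f) := restr_norm_sq Q _
  have h3 : na ^ 2 = msq Q f := restr_norm_sq Q f
  have h4 : nb ≤ na + d := by
    have heq : restr Q (lam SL2 Pe f) = restr Q f + restr Q (lam SL2 Pe f - f) := by
      rw [← restr_sub]
      abel
    rw [hnb, heq]
    refine le_trans (norm_add_le _ _) ?_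
    have := restr_le_norm Q (lam SL2 Pe f - f)
    rw [hna, hd]
    linarith
  have h5 : nb ≤ 1 := by
    rw [hnb]
    refine le_trans (restr_le_norm Q _) ?_
    rw [lam_norm, hf]
  have h6 : na ≤ 1 := by
    rw [hna]
    refine le_trans (restr_le_norm Q f) ?_
    rw [hf]
  have h7 : (0:ℝ) ≤ na := norm_nonneg _
  have h8 : (0:ℝ) ≤ nb := norm_nonneg _
  have h9 : (0:ℝ) ≤ d := norm_nonneg _
  nlinarith [mul_nonneg h8 h9, mul_nonneg h7 h9, mul_nonneg h7 h8]

/-! ### The ping-pong sets, defined via the first column -/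

def Qa (g : SL2) : Prop :=
  ((g : Matrix (Fin 2) (Fin 2) ℤ) 1 0) * ((g : Matrix (Fin 2) (Fin 2) ℤ) 1 0)
    ≤ ((g : Matrix (Fin 2) (Fin 2) ℤ) 0 0) * ((g : Matrix (Fin 2) (Fin 2) ℤ) 1 0)

def Qa' (g : SL2) : Prop :=
  ((g : Matrix (Fin 2) (Fin 2) ℤ) 0 0) * ((g : Matrix (Fin 2) (Fin 2) ℤ) 1 0)
    < -(((g : Matrix (Fin 2) (Fin 2) ℤ) 1 0) * ((g : Matrix (Fin 2) (Fin 2) ℤ) 1 0))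

def Qb (g : SL2) : Prop :=
  (((g : Matrix (Fin 2) (Fin 2) ℤ) 0 0) * ((g : Matrix (Fin 2) (Fin 2) ℤ) 0 0)
    ≤ ((g : Matrix (Fin 2) (Fin 2) ℤ) 0 0) * ((g : Matrix (Fin 2) (Fin 2) ℤ) 1 0))
  ∧ ((g : Matrix (Fin 2) (Fin 2) ℤ) 0 0) * ((g : Matrix (Fin 2) (Fin 2) ℤ) 1 0)
    < ((g : Matrix (Fin 2) (Fin 2) ℤ) 1 0) * ((g : Matrix (Fin 2) (Fin 2) ℤ) 1 0)

def Qb' (g : SL2) : Prop :=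
  (((g : Matrix (Fin 2) (Fin 2) ℤ) 0 0) * ((g : Matrix (Fin 2) (Fin 2) ℤ) 1 0)
    ≤ -(((g : Matrix (Fin 2) (Fin 2) ℤ) 0 0) * ((g : Matrix (Fin 2) (Fin 2) ℤ) 0 0)))
  ∧ ((g : Matrix (Fin 2) (Fin 2) ℤ) 0 0) ≠ 0

def Pm : SL2 := ⟨!![1, 2; 0, 1], by norm_num [Matrix.det_fin_two_of]⟩
def Rm : SL2 := ⟨!![1, 0; 2, 1], by norm_num [Matrix.det_fin_two_of]⟩

lemma col_ne (g : SL2) :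
    ¬(((g : Matrix (Fin 2) (Fin 2) ℤ) 0 0) = 0 ∧ ((g : Matrix (Fin 2) (Fin 2) ℤ) 1 0) = 0) := by
  rintro ⟨h1, h2⟩
  have hd : Matrix.det (g : Matrix (Fin 2) (Fin 2) ℤ) = 1 := g.2
  rw [Matrix.det_fin_two, h1, h2] at hd
  simp at hd

lemma Pm_entries (g : SL2) :
    ((Pm * g : SL2) : Matrix (Fin 2) (Fin 2) ℤ) 0 0
      = (g : Matrix (Fin 2) (Fin 2) ℤ) 0 0 + 2 * (g : Matrix (Fin 2) (Fin 2) ℤ) 1 0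
    ∧ ((Pm * g : SL2) : Matrix (Fin 2) (Fin 2) ℤ) 1 0 = (g : Matrix (Fin 2) (Fin 2) ℤ) 1 0 := by
  constructor <;>
  · rw [Matrix.SpecialLinearGroup.coe_mul]
    simp [Pm, Matrix.mul_apply, Fin.sum_univ_two]
    try ring

lemma Rm_entries (g : SL2) :
    ((Rm * g : SL2) : Matrix (Fin 2) (Fin 2) ℤ) 0 0 = (g : Matrix (Fin 2) (Fin 2) ℤ) 0 0
    ∧ ((Rm * g : SL2) : Matrix (Fin 2) (Fin 2) ℤ) 1 0
      = 2 * (g : Matrix (Fin 2) (Fin 2) ℤ) 0 0 + (g : Matrix (Fin 2) (Fin 2) ℤ) 1 0 := by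
  constructor <;>
  · rw [Matrix.SpecialLinearGroup.coe_mul]
    simp [Rm, Matrix.mul_apply, Fin.sum_univ_two]
    try ring

/-! ### Integer lemmas -/

lemma int_C1 (x y : ℤ) (h : ¬(x * y < -(y * y))) : y * y ≤ (x + 2 * y) * y := by
  push_neg at h
  nlinarith

lemma int_C3 (x y : ℤ) (hcol : ¬(x = 0 ∧ y = 0)) (h : ¬(x * y ≤ -(x * x) ∧ x ≠ 0)) :
    x * x ≤ x * (2 * x + y) ∧ x * (2 * x + y) < (2 * x + y) * (2 * x + y) := by
  by_cases hx0 : x = 0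
  · subst hx0
    have hy0 : y ≠ 0 := fun hy0 => hcol ⟨rfl, hy0⟩
    constructor
    · nlinarith
    · have : 0 < y * y := mul_self_pos.mpr hy0
      nlinarith
  · have hgt : -(x * x) < x * y := by
      by_contra hc
      push_neg at hc
      exact h ⟨hc, hx0⟩
    constructor
    · nlinarith
    · have h1 : 0 < x * (x + y) := by nlinarith
      have h2 : 0 < x * (2 * x + y) := by nlinarith
      nlinarith [mul_pos h1 h2, mul_self_pos.mpr hx0]

lemma C1 (g : SL2) (h : ¬ Qa' g) : Qa (Pm * g) := by
  have hp := Pm_entries g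
  show ((Pm * g : SL2) : Matrix (Fin 2) (Fin 2) ℤ) 1 0 * _ ≤ _
  rw [hp.1, hp.2]
  exact int_C1 _ _ h

lemma C3 (g : SL2) (h : ¬ Qb' g) : Qb (Rm * g) := by
  have hp := Rm_entries g
  have hi := int_C3 _ _ (col_ne g) h
  constructor
  · show ((Rm * g : SL2) : Matrix (Fin 2) (Fin 2) ℤ) 0 0 * _ ≤ _
    rw [hp.1, hp.2]
    exact hi.1
  · show ((Rm * g : SL2) : Matrix (Fin 2) (Fin 2) ℤ) 0 0 * _ < _
    rw [hp.1, hp.2]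
    exact hi.2

lemma not_aa' (x y : ℤ) (h1 : y * y ≤ x * y) (h2 : x * y < -(y * y)) : False := by
  nlinarith [sq_nonneg y]

lemma not_ab (x y : ℤ) (h1 : y * y ≤ x * y) (h2 : x * y < y * y) : False := by linarith

lemma not_ab' (x y : ℤ) (h1 : y * y ≤ x * y) (h2 : x * y ≤ -(x * x)) (h3 : x ≠ 0) : False := by
  have hx := mul_self_pos.mpr h3
  nlinarith [mul_self_nonneg y]

lemma not_a'b (x y : ℤ) (h1 : x * y < -(y * y)) (h2 : x * x ≤ x * y) : False := by
  nlinarith [mul_self_nonneg x, mul_self_nonneg y]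

lemma not_a'b' (x y : ℤ) (h1 : x * y < -(y * y)) (h2 : x * y ≤ -(x * x)) : False := by
  nlinarith [sq_nonneg (x + y)]

lemma not_bb' (x y : ℤ) (h1 : x * x ≤ x * y) (h2 : x * y ≤ -(x * x)) (h3 : x ≠ 0) : False := by
  have hx := mul_self_pos.mpr h3
  linarith

lemma disj (g : SL2) (F : ℝ) (hF : 0 ≤ F) :
    (if Qa g then F else 0) + (if Qa' g then F else 0)
      + (if Qb g then F else 0) + (if Qb' g then F else 0) ≤ F := by
  by_cases h1 : Qa g <;> by_cases h2 : Qa' g <;> by_cases h3 : Qb g <;> by_cases h4 : Qb' g <;>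
    simp only [h1, h2, h3, h4, if_true, if_false] <;>
    first
      | linarith
      | exact absurd rfl (fun _ => not_aa' _ _ h1 h2)
      | exact (not_aa' _ _ h1 h2).elim
      | exact (not_ab _ _ h1 h3.2).elim
      | exact (not_ab' _ _ h1 h4.1 h4.2).elim
      | exact (not_a'b _ _ h2 h3.1).elim
      | exact (not_a'b' _ _ h2 h4.1).elim
      | exact (not_bb' _ _ h3.1 h4.1 h4.2).elim

lemma masses_le_one (f : H2) (hf : ‖f‖ = 1) :
    msq Qa f + msq Qa' f + msq Qb f + msq Qb' f ≤ 1 := by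
  have h1 : msq Qa f + msq Qa' f + msq Qb f + msq Qb' f
      = ∑' x : SL2, ((if Qa x then ‖f x‖ ^ 2 else 0) + (if Qa' x then ‖f x‖ ^ 2 else 0)
        + (if Qb x then ‖f x‖ ^ 2 else 0) + (if Qb' x then ‖f x‖ ^ 2 else 0)) := by
    unfold msq
    rw [Summable.tsum_add (Summable.add (Summable.add (summable_ite Qa f) (summable_ite Qa' f))
        (summable_ite Qb f)) (summable_ite Qb' f),
      Summable.tsum_add (Summable.add (summable_ite Qa f) (summable_ite Qa' f)) (summable_ite Qb f),
      Summable.tsum_add (summable_ite Qa f) (summable_ite Qa' f)]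
  rw [h1]
  calc _ ≤ ∑' x : SL2, ‖f x‖ ^ 2 := by
        refine Summable.tsum_le_tsum (fun x => disj x _ (by positivity)) ?_ (summable_sq f)
        exact Summable.add (Summable.add (Summable.add (summable_ite Qa f)
          (summable_ite Qa' f)) (summable_ite Qb f)) (summable_ite Qb' f)
    _ = 1 := by rw [← norm_sq_eq, hf]; norm_num

/-! ### Hilbert-space geometry -/

lemma three_vec (u v z : H2) (hu : ‖u‖ = 1) (hv : ‖v‖ = 1) (hz : ‖z‖ = 1) :
    ‖u + v + z‖ ^ 2 = 9 - (‖u - v‖ ^ 2 + ‖u - z‖ ^ 2 + ‖v - z‖ ^ 2) := by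
  have h1 := norm_add_sq (𝕜 := ℂ) (u + v) z
  have h2 := norm_add_sq (𝕜 := ℂ) u v
  have h3 := norm_sub_sq (𝕜 := ℂ) u v
  have h4 := norm_sub_sq (𝕜 := ℂ) u z
  have h5 := norm_sub_sq (𝕜 := ℂ) v z
  have h6 : (inner ℂ (u + v) z : ℂ) = inner ℂ u z + inner ℂ v z := inner_add_left u v z
  rw [h6, map_add] at h1
  rw [hu, hv] at h2 h3
  rw [hu, hz] at h4
  rw [hv, hz] at h5
  rw [h2, hz] at h1
  rw [h1, h3, h4, h5]
  ring

end
end Aux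
section Main

open scoped Classical

noncomputable section

lemma lam_dist (g : SL2) (u w : H2) : ‖lam SL2 g u - lam SL2 g w‖ = ‖u - w‖ := by
  rw [← map_sub, lam_norm]

lemma hPm_eq : T * T = Pm := by
  apply Subtype.ext
  rw [Matrix.SpecialLinearGroup.coe_mul]
  show (!![1,1;0,1] : Matrix (Fin 2) (Fin 2) ℤ) * !![1,1;0,1] = !![1,2;0,1]
  rw [Matrix.mul_fin_two]
  norm_num

lemma hR0 : Rm * (S * T * T) = S := by
  apply Subtype.ext
  simp only [Matrix.SpecialLinearGroup.coe_mul]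
  show (!![1,0;2,1] : Matrix (Fin 2) (Fin 2) ℤ) * (!![0,-1;1,0] * !![1,1;0,1] * !![1,1;0,1])
      = !![0,-1;1,0]
  rw [Matrix.mul_fin_two, Matrix.mul_fin_two, Matrix.mul_fin_two]
  norm_num

lemma hRm : Rm = (S * T⁻¹) * (T⁻¹ * S⁻¹) := by
  have h := eq_mul_inv_of_mul_eq hR0
  rw [h]
  group

set_option maxHeartbeats 1000000 in
lemma main_unit (f : H2) (hf : ‖f‖ = 1) :
    ‖lam SL2 S f + lam SL2 S⁻¹ f + lam SL2 T f + lam SL2 T⁻¹ f‖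
      ≤ 1 + Real.sqrt (107 / 12) := by
  set v1 := lam SL2 S f with hv1
  set v2 := lam SL2 S⁻¹ f with hv2
  set v3 := lam SL2 T f with hv3
  set v4 := lam SL2 T⁻¹ f with hv4
  have hn1 : ‖v1‖ = 1 := by rw [hv1, lam_norm, hf]
  have hn2 : ‖v2‖ = 1 := by rw [hv2, lam_norm, hf]
  have hn3 : ‖v3‖ = 1 := by rw [hv3, lam_norm, hf]
  have hn4 : ‖v4‖ = 1 := by rw [hv4, lam_norm, hf]
  set al := ‖lam SL2 Pm f - f‖ with hal
  set be := ‖f - lam SL2 (S * T) f‖ with hbe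
  set ga := ‖f - lam SL2 (S * T⁻¹) f‖ with hga
  have hal0 : 0 ≤ al := norm_nonneg _
  have hbe0 : 0 ≤ be := norm_nonneg _
  have hga0 : 0 ≤ ga := norm_nonneg _
  -- pair distances
  have h34 : ‖v3 - v4‖ = al := by
    calc ‖v3 - v4‖ = ‖lam SL2 T v3 - lam SL2 T v4‖ := (lam_dist T v3 v4).symm
      _ = al := by
          rw [hv3, hv4, lam_comp, lam_comp, hPm_eq, mul_inv_cancel, lam_one, hal]
  have h23 : ‖v2 - v3‖ = be := by
    calc ‖v2 - v3‖ = ‖lam SL2 S v2 - lam SL2 S v3‖ := (lam_dist S v2 v3).symm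
      _ = be := by
          rw [hv2, hv3, lam_comp, lam_comp, mul_inv_cancel, lam_one, hbe]
  have h24 : ‖v2 - v4‖ = ga := by
    calc ‖v2 - v4‖ = ‖lam SL2 S v2 - lam SL2 S v4‖ := (lam_dist S v2 v4).symm
      _ = ga := by
          rw [hv2, hv4, lam_comp, lam_comp, mul_inv_cancel, lam_one, hga]
  -- ping-pong estimate
  have hma := mass_pingpong Qa Qa' Pm C1 f hf
  have hmb := mass_pingpong Qb Qb' Rm C3 f hf
  have hmtot := masses_le_one f hf
  have hDR : ‖lam SL2 Rm f - f‖ ≤ be + ga := by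
    have hcomp : lam SL2 Rm f = lam SL2 (S * T⁻¹) (lam SL2 (T⁻¹ * S⁻¹) f) := by
      rw [lam_comp, ← hRm]
    have htri : ‖lam SL2 Rm f - f‖
        ≤ ‖lam SL2 Rm f - lam SL2 (S * T⁻¹) f‖ + ‖lam SL2 (S * T⁻¹) f - f‖ := by
      have := dist_triangle (lam SL2 Rm f) (lam SL2 (S * T⁻¹) f) f
      simpa [dist_eq_norm] using this
    have e1 : ‖lam SL2 Rm f - lam SL2 (S * T⁻¹) f‖ = be := by
      rw [hcomp, lam_dist]
      calc ‖lam SL2 (T⁻¹ * S⁻¹) f - f‖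
          = ‖lam SL2 (S * T) (lam SL2 (T⁻¹ * S⁻¹) f) - lam SL2 (S * T) f‖ :=
            (lam_dist (S * T) _ f).symm
        _ = be := by
            rw [lam_comp, show (S * T) * (T⁻¹ * S⁻¹) = (1 : SL2) from by group, lam_one, hbe]
    have e2 : ‖lam SL2 (S * T⁻¹) f - f‖ = ga := by rw [hga, norm_sub_rev]
    linarith
  set dR := ‖lam SL2 Rm f - f‖ with hdR
  have hma2 : 1 ≤ msq Qa f + msq Qa' f + 2 * al := by rw [hal]; exact hma
  have hmb2 : 1 ≤ msq Qb f + msq Qb' f + 2 * dR := by rw [hdR]; exact hmb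
  have hDR2 : dR ≤ be + ga := by rw [hdR]; exact hDR
  clear_value v1 v2 v3 v4 al be ga dR
  have hmQa : 0 ≤ msq Qa f := by rw [← restr_norm_sq]; exact sq_nonneg _
  have hmQa' : 0 ≤ msq Qa' f := by rw [← restr_norm_sq]; exact sq_nonneg _
  have hmQb : 0 ≤ msq Qb f := by rw [← restr_norm_sq]; exact sq_nonneg _
  have hmQb' : 0 ≤ msq Qb' f := by rw [← restr_norm_sq]; exact sq_nonneg _
  have hsum : (1 : ℝ) / 2 ≤ al + be + ga := by linarith
  have hquad : (1 : ℝ) / 12 ≤ al ^ 2 + be ^ 2 + ga ^ 2 := by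
    nlinarith [sq_nonneg (al - be), sq_nonneg (al - ga), sq_nonneg (be - ga)]
  -- geometry
  have hw := three_vec v2 v3 v4 hn2 hn3 hn4
  rw [h23, h24, h34] at hw
  have hw2 : ‖v2 + v3 + v4‖ ^ 2 ≤ 107 / 12 := by rw [hw]; linarith
  have hwn : ‖v2 + v3 + v4‖ ≤ Real.sqrt (107 / 12) :=
    (Real.le_sqrt (norm_nonneg _) (by norm_num)).mpr hw2
  have hre : v1 + v2 + v3 + v4 = v1 + (v2 + v3 + v4) := by abel
  calc ‖v1 + v2 + v3 + v4‖ = ‖v1 + (v2 + v3 + v4)‖ := by rw [hre]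
    _ ≤ ‖v1‖ + ‖v2 + v3 + v4‖ := norm_add_le _ _
    _ ≤ 1 + Real.sqrt (107 / 12) := by rw [hn1]; linarith

end
end Main
set_option maxHeartbeats 1000000 in
theorem stmt4 :
    ‖lam (Matrix.SpecialLinearGroup (Fin 2) ℤ) S
      + lam (Matrix.SpecialLinearGroup (Fin 2) ℤ) S⁻¹
      + lam (Matrix.SpecialLinearGroup (Fin 2) ℤ) T
      + lam (Matrix.SpecialLinearGroup (Fin 2) ℤ) T⁻¹‖ < 4 := by
  have hC : (0:ℝ) ≤ 1 + Real.sqrt (107 / 12) := by positivity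
  have hb : ‖lam SL2 S + lam SL2 S⁻¹ + lam SL2 T + lam SL2 T⁻¹‖
      ≤ 1 + Real.sqrt (107 / 12) := by
    refine ContinuousLinearMap.opNorm_le_bound _ hC (fun f => ?_)
    by_cases hf0 : f = 0
    · simp [hf0]
    · have hnf : (0:ℝ) < ‖f‖ := norm_pos_iff.mpr hf0
      set c : ℂ := ((‖f‖ : ℝ) : ℂ)⁻¹ with hc
      set u : H2 := c • f with hu
      have hcn : ‖c‖ = ‖f‖⁻¹ := by
        rw [hc, norm_inv]
        norm_num [abs_of_nonneg (norm_nonneg f)]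
      have hun : ‖u‖ = 1 := by
        rw [hu, norm_smul, hcn, inv_mul_cancel₀ (ne_of_gt hnf)]
      have hmain := main_unit u hun
      have happ : (lam SL2 S + lam SL2 S⁻¹ + lam SL2 T + lam SL2 T⁻¹) u
          = lam SL2 S u + lam SL2 S⁻¹ u + lam SL2 T u + lam SL2 T⁻¹ u := by
        simp [ContinuousLinearMap.add_apply]
      have happf : (lam SL2 S + lam SL2 S⁻¹ + lam SL2 T + lam SL2 T⁻¹) u
          = c • ((lam SL2 S + lam SL2 S⁻¹ + lam SL2 T + lam SL2 T⁻¹) f) := by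
        rw [hu, _root_.map_smul]
      rw [← happ] at hmain
      rw [happf, norm_smul, hcn] at hmain
      have h3 := mul_le_mul_of_nonneg_left hmain (le_of_lt hnf)
      have h4 : ‖f‖ * (‖f‖⁻¹
          * ‖(lam SL2 S + lam SL2 S⁻¹ + lam SL2 T + lam SL2 T⁻¹) f‖)
          = ‖(lam SL2 S + lam SL2 S⁻¹ + lam SL2 T + lam SL2 T⁻¹) f‖ := by
        field_simp
      rw [h4] at h3
      rw [mul_comm]
      exact h3
  have hlt : 1 + Real.sqrt (107 / 12) < 4 := by
    have h : Real.sqrt (107 / 12) < 3 := (Real.sqrt_lt' (by norm_num)).mpr (by norm_num)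
    linarith
  exact lt_of_le_of_lt hb hlt
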